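/- Under the hypotheses that the expansion |g(ε,·)|^p = Σ_{k=0}^n g_{k,p} ε^k + g̃_{n,p}(ε,·)ε^n holds with |g_{k,p}(ω)| ≤ c₁|g(ω)|^{p−(k/n)p(n)+(k/n)p̲} and the transfer operator L₀ of (p̲+η)log|g| + log ψ is bounded (‖L₀ 1‖_∞ < ∞ for some η > 0 with p(n)+η < p), the operators (L_{k,p} f)(ω) = Σ_{e : t(e)=i(ω₀)} ζ_{k,p}(e·ω) f(e·ω) with ζ_{k,p} = Σ_{i=0}^k g_{i,p} ψ_{k−i} satisfy ‖L_{k,p} f‖_∞ ≤ C ‖L₀ 1‖_∞ ‖f‖_∞, i.e. are bounded on the space of bounded continuous functions, uniformly for p in a compact subset of (p(n), ∞). -/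

import Mathlib

/-- The one-sided shift space of a countable directed graph with transition
relation `A` (edge `e` may be followed by edge `e'` iff `A e e'`). -/
abbrev ShiftSpace {E : Type*} (A : E → E → Prop) : Type _ :=
  {ω : ℕ → E // ∀ i, A (ω i) (ω (i + 1))}

/-- Concatenation `e · ω` of an admissible symbol `e` with `ω`. -/
def ShiftSpace.cons {E : Type*} {A : E → E → Prop} (e : E) (ω : ShiftSpace A)
    (h : A e (ω.1 0)) : ShiftSpace A :=
  ⟨fun i => Nat.casesOn i e fun j => ω.1 j, by
    intro i
    cases i with
    | zero => exact h
    | succ j => exact ω.2 j⟩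


/-- Auxiliary: comparison bound for a tsum. -/
theorem tsum_abs_le_of_le {ι : Type*} (T u : ι → ℝ) (c : ℝ)
    (hu : Summable u) (key : ∀ i, |T i| ≤ c * u i) :
    |∑' i, T i| ≤ c * ∑' i, u i := by
  have hcu : Summable fun i => c * u i := hu.mul_left c
  have habs : Summable fun i => |T i| :=
    Summable.of_nonneg_of_le (fun i => abs_nonneg _) key hcu
  calc |∑' i, T i| ≤ ∑' i, |T i| := by
        rw [← Real.norm_eq_abs]
        exact (norm_tsum_le_tsum_norm (by simpa only [Real.norm_eq_abs] using habs)).trans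
          (le_of_eq (by simp [Real.norm_eq_abs]))
    _ ≤ ∑' i, c * u i := Summable.tsum_le_tsum key habs hcu
    _ = c * ∑' i, u i := tsum_mul_left

/-- uniform boundedness of the coefficient operators `L_{k,p}`
of the expansion of the perturbed Ruelle operator, on bounded continuous
functions, uniformly for `p` in a compact subset of `(p(n), ∞)`. -/
theorem coefficient_operators_bounded
    {E : Type*} [Countable E] (A : E → E → Prop)
    (g ψ : ShiftSpace A → ℝ) (n : ℕ) (hn : 1 ≤ n)
    (pl pn η : ℝ) (hpl : 0 ≤ pl) (hplpn : pl ≤ pn) (hη : 0 < η)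
    (I : Set ℝ) (hIc : IsCompact I) (hI : ∀ p ∈ I, pn + η < p)
    (c₁ cψ : ℝ) (hc₁ : 0 < c₁) (hcψ : 0 < cψ)
    (gkp : ℝ → ℕ → ShiftSpace A → ℝ) (ψk : ℕ → ShiftSpace A → ℝ)
    (hg : ∀ ω, 0 < |g ω| ∧ |g ω| < 1) (hψ : ∀ ω, 0 < ψ ω) (hψ0 : ψk 0 = ψ)
    (hgkp : ∀ p ∈ I, ∀ k ≤ n, ∀ ω,
      |gkp p k ω| ≤ c₁ * |g ω| ^ (p - ((k : ℝ) / n) * pn + ((k : ℝ) / n) * pl))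
    (hψk : ∀ k ≤ n, ∀ ω, |ψk k ω| ≤ cψ * ψ ω)
    (B : ℝ)
    (hsum : ∀ ω : ShiftSpace A,
      Summable fun e : {e : E // A e (ω.1 0)} =>
        |g (ShiftSpace.cons e.1 ω e.2)| ^ (pl + η) * ψ (ShiftSpace.cons e.1 ω e.2))
    (hB : ∀ ω : ShiftSpace A,
      (∑' e : {e : E // A e (ω.1 0)},
        |g (ShiftSpace.cons e.1 ω e.2)| ^ (pl + η) * ψ (ShiftSpace.cons e.1 ω e.2)) ≤ B) :
    ∃ C > 0, ∀ p ∈ I, ∀ k, 1 ≤ k → k ≤ n →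
      ∀ (f : ShiftSpace A → ℝ) (F : ℝ), (∀ ω, |f ω| ≤ F) →
        ∀ ω : ShiftSpace A,
          |∑' e : {e : E // A e (ω.1 0)},
              (∑ i ∈ Finset.range (k + 1),
                gkp p i (ShiftSpace.cons e.1 ω e.2) *
                  ψk (k - i) (ShiftSpace.cons e.1 ω e.2)) *
                f (ShiftSpace.cons e.1 ω e.2)| ≤
            C * B * F := by

  refine ⟨(n + 1 : ℝ) * c₁ * cψ, by positivity, ?_⟩
  intro p hp k hk1 hkn f F hf ω
  set K : ℝ := (n + 1 : ℝ) * c₁ * cψ with hK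
  have hK0 : 0 < K := by positivity
  have hF : 0 ≤ F := le_trans (abs_nonneg _) (hf ω)
  have hB0 : 0 ≤ B := le_trans (tsum_nonneg fun e =>
      mul_nonneg (Real.rpow_nonneg (abs_nonneg _) _) (le_of_lt (hψ _))) (hB ω)
  -- pointwise bound on each term
  have key : ∀ e : {e : E // A e (ω.1 0)},
      |(∑ i ∈ Finset.range (k + 1),
          gkp p i (ShiftSpace.cons e.1 ω e.2) * ψk (k - i) (ShiftSpace.cons e.1 ω e.2)) *
        f (ShiftSpace.cons e.1 ω e.2)|
      ≤ K * F * (|g (ShiftSpace.cons e.1 ω e.2)| ^ (pl + η) * ψ (ShiftSpace.cons e.1 ω e.2)) := by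
    intro e
    set ω' := ShiftSpace.cons e.1 ω e.2 with hω'
    have hg0 := (hg ω').1
    have hg1 := (hg ω').2
    have hψ' := hψ ω'
    have hterm : ∀ i ∈ Finset.range (k + 1),
        |gkp p i ω' * ψk (k - i) ω'| ≤ c₁ * cψ * (|g ω'| ^ (pl + η) * ψ ω') := by
      intro i hi
      have hik : i ≤ k := Nat.lt_succ_iff.mp (Finset.mem_range.mp hi)
      have hin : i ≤ n := le_trans hik hkn
      have hexp : pl + η ≤ p - ((i : ℝ) / n) * pn + ((i : ℝ) / n) * pl := by
        have hfrac0 : (0 : ℝ) ≤ (i : ℝ) / n := by positivity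
        have hfrac1 : (i : ℝ) / n ≤ 1 := by
          rw [div_le_one (by exact_mod_cast Nat.lt_of_lt_of_le Nat.zero_lt_one hn)]
          exact_mod_cast hin
        have h1 : ((i : ℝ) / n) * (pn - pl) ≤ 1 * (pn - pl) :=
          mul_le_mul_of_nonneg_right hfrac1 (by linarith)
        have h2 := hI p hp
        nlinarith
      have hgpow : |g ω'| ^ (p - ((i : ℝ) / n) * pn + ((i : ℝ) / n) * pl)
          ≤ |g ω'| ^ (pl + η) :=
        Real.rpow_le_rpow_of_exponent_ge hg0 (le_of_lt hg1) hexp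
      calc |gkp p i ω' * ψk (k - i) ω'| = |gkp p i ω'| * |ψk (k - i) ω'| := abs_mul _ _
        _ ≤ (c₁ * |g ω'| ^ (p - ((i : ℝ) / n) * pn + ((i : ℝ) / n) * pl)) * (cψ * ψ ω') := by
            apply mul_le_mul (hgkp p hp i hin ω') (hψk (k - i) (le_trans (Nat.sub_le _ _) hkn) ω')
              (abs_nonneg _) (by positivity)
        _ ≤ (c₁ * |g ω'| ^ (pl + η)) * (cψ * ψ ω') := by
            apply mul_le_mul_of_nonneg_right _ (by positivity)
            exact mul_le_mul_of_nonneg_left hgpow (le_of_lt hc₁)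
        _ = c₁ * cψ * (|g ω'| ^ (pl + η) * ψ ω') := by ring
    calc |(∑ i ∈ Finset.range (k + 1), gkp p i ω' * ψk (k - i) ω') * f ω'|
        = |∑ i ∈ Finset.range (k + 1), gkp p i ω' * ψk (k - i) ω'| * |f ω'| := abs_mul _ _
      _ ≤ (∑ i ∈ Finset.range (k + 1), |gkp p i ω' * ψk (k - i) ω'|) * F := by
          apply mul_le_mul (Finset.abs_sum_le_sum_abs _ _) (hf ω') (abs_nonneg _)
            (Finset.sum_nonneg fun i _ => abs_nonneg _)
      _ ≤ (∑ _i ∈ Finset.range (k + 1), c₁ * cψ * (|g ω'| ^ (pl + η) * ψ ω')) * F := by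
          apply mul_le_mul_of_nonneg_right (Finset.sum_le_sum hterm) hF
      _ = (k + 1 : ℝ) * c₁ * cψ * (|g ω'| ^ (pl + η) * ψ ω') * F := by
          rw [Finset.sum_const, Finset.card_range]; push_cast; ring
      _ ≤ K * (|g ω'| ^ (pl + η) * ψ ω') * F := by
          apply mul_le_mul_of_nonneg_right _ hF
          apply mul_le_mul_of_nonneg_right _ (by positivity)
          have : (k : ℝ) + 1 ≤ (n : ℝ) + 1 := by exact_mod_cast Nat.succ_le_succ hkn
          nlinarith
      _ = K * F * (|g ω'| ^ (pl + η) * ψ ω') := by ring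
  have main := tsum_abs_le_of_le
    (fun e : {e : E // A e (ω.1 0)} =>
      (∑ i ∈ Finset.range (k + 1),
        gkp p i (ShiftSpace.cons e.1 ω e.2) * ψk (k - i) (ShiftSpace.cons e.1 ω e.2)) *
        f (ShiftSpace.cons e.1 ω e.2))
    (fun e => |g (ShiftSpace.cons e.1 ω e.2)| ^ (pl + η) * ψ (ShiftSpace.cons e.1 ω e.2))
    (K * F) (hsum ω) key
  refine le_trans main ?_
  calc K * F * ∑' e : {e : E // A e (ω.1 0)},
        |g (ShiftSpace.cons e.1 ω e.2)| ^ (pl + η) * ψ (ShiftSpace.cons e.1 ω e.2)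
      ≤ K * F * B := mul_le_mul_of_nonneg_left (hB ω) (by positivity)
    _ = K * B * F := by ring
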